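/- Let D be an Eulerian directed multigraph on n ≥ 2 vertices (every vertex has in-degree equal to out-degree) whose minimum directed cut value c is at least 1, and let α ≥ 1 be a real number. Then the number of nonempty proper vertex subsets A whose directed cut has value at most α·c is less than 2n^{2α}. -/

import Mathlib

open scoped Classical

/-- A directed multigraph on vertex type `V` is given by an edge-index type `E` together with a
map `D : E → V × V` assigning to each edge its tail and head (parallel edges allowed).  For a
vertex set `A`, `dirCutValue D A` is the value of the directed cut of `A`: the number of edges
with tail in `A` and head outside `A`. -/
noncomputable def dirCutValue {V E : Type} [Fintype E] [DecidableEq V]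
    (D : E → V × V) (A : Finset V) : ℕ :=
  (Finset.univ.filter (fun e => (D e).1 ∈ A ∧ (D e).2 ∉ A)).card

/-! ### Auxiliary counting lemmas -/

open Finset

lemma card_filter_mem_eq_sum {V E : Type} [Fintype E] [DecidableEq V]
    (f : E → V) (A : Finset V) :
    (univ.filter (fun e => f e ∈ A)).card
      = ∑ x ∈ A, (univ.filter (fun e => f e = x)).card := by
  classical
  simp only [Finset.card_filter]
  rw [Finset.sum_comm]
  refine Finset.sum_congr rfl fun e _ => ?_
  simp [Finset.sum_ite_eq A (f e) (fun _ => (1:ℕ))]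

lemma card_filter_and_split {E : Type} [Fintype E] (p q : E → Prop)
    [DecidablePred p] [DecidablePred q] :
    (univ.filter p).card
      = (univ.filter (fun e => p e ∧ q e)).card
        + (univ.filter (fun e => p e ∧ ¬ q e)).card := by
  classical
  rw [← Finset.filter_filter, ← Finset.filter_filter,
    Finset.card_filter_add_card_filter_not]

lemma dirCut_compl {V E : Type} [Fintype V] [Fintype E] [DecidableEq V]
    (D : E → V × V)
    (heul : ∀ x : V, (Finset.univ.filter (fun e => (D e).1 = x)).card
        = (Finset.univ.filter (fun e => (D e).2 = x)).card)
    (A : Finset V) :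
    dirCutValue D A = dirCutValue D Aᶜ := by
  classical
  have hT : (univ.filter (fun e => (D e).1 ∈ A)).card
      = (univ.filter (fun e => (D e).2 ∈ A)).card := by
    rw [card_filter_mem_eq_sum, card_filter_mem_eq_sum]
    exact Finset.sum_congr rfl fun x _ => heul x
  have h1 := card_filter_and_split (fun e => (D e).1 ∈ A) (fun e => (D e).2 ∈ A)
  have h2 := card_filter_and_split (fun e => (D e).2 ∈ A) (fun e => (D e).1 ∈ A)
  have e1 : (univ.filter (fun e => (D e).2 ∈ A ∧ (D e).1 ∈ A)).card
      = (univ.filter (fun e => (D e).1 ∈ A ∧ (D e).2 ∈ A)).card := by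
    congr 1; apply Finset.filter_congr; intro e _; tauto
  have e2 : (univ.filter (fun e => (D e).1 ∈ Aᶜ ∧ (D e).2 ∉ Aᶜ)).card
      = (univ.filter (fun e => (D e).2 ∈ A ∧ ¬ (D e).1 ∈ A)).card := by
    congr 1; apply Finset.filter_congr; intro e _; simp [Finset.mem_compl]; tauto
  unfold dirCutValue
  omega

lemma card_sameside {V E : Type} [Fintype V] [Fintype E] [DecidableEq V]
    (D : E → V × V) (A : Finset V) :
    (univ.filter (fun e => ((D e).1 ∈ A ↔ (D e).2 ∈ A))).card
        + dirCutValue D A + dirCutValue D Aᶜ = Fintype.card E := by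
  classical
  have h0 : (univ.filter (fun e => ((D e).1 ∈ A ↔ (D e).2 ∈ A))).card
      + (univ.filter (fun e => ¬((D e).1 ∈ A ↔ (D e).2 ∈ A))).card = Fintype.card E := by
    rw [Finset.card_filter_add_card_filter_not, Finset.card_univ]
  have h1 := card_filter_and_split (fun e => ¬((D e).1 ∈ A ↔ (D e).2 ∈ A))
      (fun e => (D e).1 ∈ A)
  have e1 : (univ.filter (fun e => ¬((D e).1 ∈ A ↔ (D e).2 ∈ A) ∧ (D e).1 ∈ A)).card
      = (univ.filter (fun e => (D e).1 ∈ A ∧ (D e).2 ∉ A)).card := by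
    congr 1; apply Finset.filter_congr; intro e _; constructor <;> intro h <;> simp at * <;> tauto
  have e2 : (univ.filter (fun e => ¬((D e).1 ∈ A ↔ (D e).2 ∈ A) ∧ ¬(D e).1 ∈ A)).card
      = (univ.filter (fun e => (D e).1 ∈ Aᶜ ∧ (D e).2 ∉ Aᶜ)).card := by
    congr 1; apply Finset.filter_congr; intro e _
    simp [Finset.mem_compl]; tauto
  unfold dirCutValue
  omega

lemma card_filter_subtype {E : Type} [Fintype E] (r : E → Prop)
    (P : E → Prop) [Fintype {e // r e}]
    [DecidablePred (fun f : {e // r e} => P f.1)]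
    [DecidablePred (fun e => r e ∧ P e)] :
    (univ.filter (fun f : {e // r e} => P f.1)).card
      = (univ.filter (fun e => r e ∧ P e)).card := by
  classical
  apply Finset.card_bij (fun (f : {e // r e}) _ => f.1)
  · intro f hf
    simp only [Finset.mem_filter, Finset.mem_univ, true_and] at *
    exact ⟨f.2, hf⟩
  · intro f _ g _ h; exact Subtype.ext h
  · intro e he
    simp only [Finset.mem_filter, Finset.mem_univ, true_and] at he
    exact ⟨⟨e, he.1⟩, by simp [he.2], rfl⟩

/-! ### Contraction of an edge -/

section Contr

variable {V E : Type} [Fintype V] [DecidableEq V] [Fintype E]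

/-- the quotient map identifying `v` with `u` -/
noncomputable def cq {u v : V} (huv : u ≠ v) (x : V) : {y : V // y ≠ v} :=
  if h : x = v then ⟨u, huv⟩ else ⟨x, h⟩

omit [Fintype V] in
lemma cq_surj {u v : V} (huv : u ≠ v) (x' : {y : V // y ≠ v}) : cq huv x'.1 = x' := by
  unfold cq; split
  · exact absurd ‹x'.1 = v› x'.2
  · rfl

variable (D : E → V × V) {u v : V} (huv : u ≠ v)

/-- edges of the contracted graph -/
noncomputable def cD : {f : E // cq huv (D f).1 ≠ cq huv (D f).2}
    → {y : V // y ≠ v} × {y : V // y ≠ v} :=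
  fun f => (cq huv (D f.1).1, cq huv (D f.1).2)

/-- pull a vertex set of the contracted graph back -/
noncomputable def pb (A' : Finset {y : V // y ≠ v}) : Finset V :=
  univ.filter (fun x => cq huv x ∈ A')

lemma cD_cut (A' : Finset {y : V // y ≠ v}) :
    dirCutValue (cD D huv) A' = dirCutValue D (pb huv A') := by
  unfold dirCutValue cD pb
  dsimp only
  rw [card_filter_subtype (fun f => cq huv (D f).1 ≠ cq huv (D f).2)
      (fun f => cq huv (D f).1 ∈ A' ∧ cq huv (D f).2 ∉ A')]
  congr 1
  apply Finset.filter_congr; intro f _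
  simp only [Finset.mem_filter, Finset.mem_univ, true_and]
  constructor
  · rintro ⟨_, h1, h2⟩; exact ⟨h1, h2⟩
  · rintro ⟨h1, h2⟩; exact ⟨fun h => h2 (h ▸ h1), h1, h2⟩

lemma pb_nonempty {A' : Finset {y : V // y ≠ v}} (h : A'.Nonempty) :
    (pb huv A').Nonempty := by
  obtain ⟨x', hx'⟩ := h
  exact ⟨x'.1, by simp [pb, cq_surj huv x', hx']⟩

lemma pb_compl (A' : Finset {y : V // y ≠ v}) : (pb huv A')ᶜ = pb huv A'ᶜ := by
  ext x; simp [pb, Finset.mem_compl]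

omit [Fintype E] in
lemma cD_card : Fintype.card {y : V // y ≠ v} = Fintype.card V - 1 := by
  have : Fintype.card {y : V // ¬ (y = v)} = Fintype.card V - Fintype.card {y : V // y = v} :=
    Fintype.card_subtype_compl _
  simpa [Fintype.card_subtype_eq] using this

omit [Fintype V] [Fintype E] in
lemma cD_nd : ∀ f, (cD D huv f).1 ≠ (cD D huv f).2 := fun f => f.2

lemma cD_eul
    (heul : ∀ x : V, (Finset.univ.filter (fun e => (D e).1 = x)).card
        = (Finset.univ.filter (fun e => (D e).2 = x)).card) :
    ∀ x' : {y : V // y ≠ v},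
      (Finset.univ.filter (fun f => (cD D huv f).1 = x')).card
        = (Finset.univ.filter (fun f => (cD D huv f).2 = x')).card := by
  intro x'
  unfold cD
  dsimp only
  rw [card_filter_subtype (fun f => cq huv (D f).1 ≠ cq huv (D f).2)
      (fun f => cq huv (D f).1 = x'),
    card_filter_subtype (fun f => cq huv (D f).1 ≠ cq huv (D f).2)
      (fun f => cq huv (D f).2 = x')]
  have h1 := card_filter_and_split (fun e : E => cq huv (D e).1 = x')
      (fun e => cq huv (D e).1 ≠ cq huv (D e).2)
  have h2 := card_filter_and_split (fun e : E => cq huv (D e).2 = x')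
      (fun e => cq huv (D e).1 ≠ cq huv (D e).2)
  have hloop : (univ.filter (fun e : E => cq huv (D e).1 = x'
        ∧ ¬ cq huv (D e).1 ≠ cq huv (D e).2)).card
      = (univ.filter (fun e : E => cq huv (D e).2 = x'
        ∧ ¬ cq huv (D e).1 ≠ cq huv (D e).2)).card := by
    congr 1; apply Finset.filter_congr; intro f _
    simp only [not_not]
    constructor
    · rintro ⟨h, h'⟩; exact ⟨h' ▸ h, h'⟩
    · rintro ⟨h, h'⟩; exact ⟨h' ▸ h, h'⟩
  have htot : (univ.filter (fun e : E => cq huv (D e).1 = x')).card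
      = (univ.filter (fun e : E => cq huv (D e).2 = x')).card := by
    have l1 : (univ.filter (fun e : E => cq huv (D e).1 = x')).card
        = (univ.filter (fun e : E => (D e).1 ∈ univ.filter (fun x => cq huv x = x'))).card := by
      congr 1; apply Finset.filter_congr; intro f _; simp
    have l2 : (univ.filter (fun e : E => cq huv (D e).2 = x')).card
        = (univ.filter (fun e : E => (D e).2 ∈ univ.filter (fun x => cq huv x = x'))).card := by
      congr 1; apply Finset.filter_congr; intro f _; simp
    rw [l1, l2, card_filter_mem_eq_sum, card_filter_mem_eq_sum]
    exact Finset.sum_congr rfl fun x _ => heul x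
  have e1 : (univ.filter (fun e : E => cq huv (D e).1 = x'
        ∧ cq huv (D e).1 ≠ cq huv (D e).2)).card
      = (univ.filter (fun e : E => cq huv (D e).1 ≠ cq huv (D e).2
        ∧ cq huv (D e).1 = x')).card := by
    congr 1; apply Finset.filter_congr; intro f _; tauto
  have e2 : (univ.filter (fun e : E => cq huv (D e).2 = x'
        ∧ cq huv (D e).1 ≠ cq huv (D e).2)).card
      = (univ.filter (fun e : E => cq huv (D e).1 ≠ cq huv (D e).2
        ∧ cq huv (D e).2 = x')).card := by
    congr 1; apply Finset.filter_congr; intro f _; tauto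
  omega

end Contr

/-! ### The section map from cuts not separated by an edge -/

section Phi
variable {V : Type} [Fintype V] [DecidableEq V] {u v : V}

noncomputable def phi (v : V) (A : Finset V) : Finset {y : V // y ≠ v} :=
  univ.filter (fun x' => x'.1 ∈ A)

lemma pb_phi (huv : u ≠ v) (A : Finset V) (hA : u ∈ A ↔ v ∈ A) :
    pb huv (phi v A) = A := by
  ext x
  simp only [pb, Finset.mem_filter, Finset.mem_univ, true_and, phi]
  unfold cq
  split
  · next h => subst h; simp [hA]
  · simp

lemma phi_nonempty (huv : u ≠ v) (A : Finset V) (hA : A.Nonempty) (hiff : u ∈ A ↔ v ∈ A) :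
    (phi v A).Nonempty := by
  obtain ⟨x, hx⟩ := hA
  by_cases hxv : x = v
  · subst hxv
    exact ⟨⟨u, huv⟩, by simp [phi, hiff.2 hx]⟩
  · exact ⟨⟨x, hxv⟩, by simp [phi, hx]⟩

lemma phi_compl_nonempty (huv : u ≠ v) (A : Finset V) (hA : Aᶜ.Nonempty)
    (hiff : u ∈ A ↔ v ∈ A) : (phi v A)ᶜ.Nonempty := by
  obtain ⟨x, hx⟩ := hA
  rw [Finset.mem_compl] at hx
  by_cases hxv : x = v
  · subst hxv
    refine ⟨⟨u, huv⟩, ?_⟩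
    simp only [Finset.mem_compl, phi, Finset.mem_filter, Finset.mem_univ, true_and]
    exact fun h => hx (hiff.1 h)
  · exact ⟨⟨x, hxv⟩, by simp [phi, hx]⟩

end Phi
noncomputable def Kfun (t : ℝ) (r n : ℕ) : ℝ :=
  ((2:ℝ)^r - 2) * ∏ i ∈ Finset.Icc (r+1) n, ((i:ℝ)/((i:ℝ) - t))

section Kb
variable {t : ℝ} {r : ℕ} (ht : 2 ≤ t) (htr : t ≤ r) (hrt : (r:ℝ) < t + 1) (hr2 : 2 ≤ r)

lemma fact_le_pow_mul (a : ℕ) : ∀ b : ℕ, (a+b).factorial ≤ a.factorial * (a+b)^b := by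
  intro b
  induction b with
  | zero => simp
  | succ b ih =>
      have h1 : (a+(b+1)).factorial = (a+b+1) * (a+b).factorial := by
        rw [show a+(b+1) = (a+b)+1 by ring, Nat.factorial_succ]
      rw [h1]
      calc (a+b+1) * (a+b).factorial ≤ (a+b+1) * (a.factorial * (a+b)^b) :=
            Nat.mul_le_mul_left _ ih
        _ ≤ a.factorial * (a+(b+1))^(b+1) := by
            rw [pow_succ]
            have h2 : (a+b)^b ≤ (a+(b+1))^b := Nat.pow_le_pow_left (by omega) b
            calc (a+b+1) * (a.factorial * (a+b)^b)
                ≤ (a+b+1) * (a.factorial * (a+(b+1))^b) := by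
                  exact Nat.mul_le_mul_left _ (Nat.mul_le_mul_left _ h2)
              _ = a.factorial * ((a+(b+1))^b * (a+(b+1))) := by ring
        
lemma two_pow_le_fact : ∀ r : ℕ, 1 ≤ r → 2^(r-1) ≤ r.factorial := by
  intro r
  induction r with
  | zero => omega
  | succ r ih =>
      intro _
      rcases Nat.eq_zero_or_pos r with h | h
      · subst h; simp
      · have := ih h
        have h2 : r + 1 - 1 = (r-1) + 1 := by omega
        rw [h2, pow_succ, Nat.factorial_succ]
        calc 2^(r-1) * 2 ≤ r.factorial * (r+1) := by
              apply Nat.mul_le_mul this (by omega)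
          _ = (r+1) * r.factorial := by ring

include ht htr hrt hr2

-- product of (i - t) lower bound via AM-GM
lemma prod_sub_ge : ∀ k : ℕ,
    (((k+1).factorial : ℝ)) ^ (1 - (t - r + 1)) * ((k.factorial : ℝ)) ^ (t - r + 1)
      ≤ ∏ i ∈ Finset.Icc (r+1) (r+k), ((i:ℝ) - t) := by
  set s := t - r + 1 with hs
  have hs0 : 0 ≤ s := by simp only [hs]; linarith
  have hs1 : s ≤ 1 := by simp only [hs]; linarith
  intro k
  induction k with
  | zero =>
      simp [Finset.Icc_eq_empty_of_lt (by omega : r + 0 < r + 1)]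
  | succ k ih =>
      rw [show r+(k+1) = (r+k)+1 by ring, Finset.prod_Icc_succ_top (by omega : r+1 ≤ r+k+1)]
      have hfac : (((k+2):ℕ).factorial : ℝ) = ((k+2):ℝ) * ((k+1).factorial : ℝ) := by
        rw [show ((k+2):ℕ) = (k+1)+1 by ring, Nat.factorial_succ]; push_cast; ring
      have hfac2 : (((k+1):ℕ).factorial : ℝ) = ((k+1):ℝ) * ((k).factorial : ℝ) := by
        rw [Nat.factorial_succ]; push_cast; ring
      have hgm : ((k:ℝ)+2) ^ (1-s) * ((k:ℝ)+1) ^ s ≤ ((r:ℝ)+k+1) - t := by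
        have := Real.geom_mean_le_arith_mean2_weighted (by linarith : (0:ℝ) ≤ 1-s) hs0
          (by positivity : (0:ℝ) ≤ (k:ℝ)+2) (by positivity : (0:ℝ) ≤ (k:ℝ)+1)
          (by ring : (1-s) + s = 1)
        calc ((k:ℝ)+2) ^ (1-s) * ((k:ℝ)+1) ^ s ≤ (1-s) * ((k:ℝ)+2) + s * ((k:ℝ)+1) := this
          _ = ((r:ℝ)+k+1) - t := by simp only [hs]; ring
      have hpos1 : (0:ℝ) ≤ ((k+1).factorial : ℝ) := by positivity
      have hpos2 : (0:ℝ) ≤ ((k).factorial : ℝ) := by positivity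
      calc (((k+1+1):ℕ).factorial : ℝ) ^ (1-s) * (((k+1):ℕ).factorial : ℝ) ^ s
          = (((k:ℝ)+2) ^ (1-s) * ((k:ℝ)+1) ^ s)
            * ((((k+1):ℕ).factorial : ℝ) ^ (1-s) * (((k):ℕ).factorial : ℝ) ^ s) := by
            rw [show ((k+1+1):ℕ) = ((k+2):ℕ) by ring, hfac, hfac2,
              Real.mul_rpow (by positivity) (by positivity),
              Real.mul_rpow (by positivity) (by positivity),
              Real.mul_rpow (by positivity) (by positivity)]
            ring
        _ ≤ (((r:ℝ)+k+1) - t) * (∏ i ∈ Finset.Icc (r+1) (r+k), ((i:ℝ) - t)) := by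
            apply mul_le_mul hgm ih (by positivity) (by linarith)
        _ = (∏ i ∈ Finset.Icc (r+1) (r+k), ((i:ℝ) - t)) * ((↑(r+k+1):ℝ) - t) := by
            push_cast; ring

omit ht htr hrt hr2 in
lemma prod_Icc_id (r : ℕ) : ∀ k : ℕ,
    (r.factorial : ℝ) * ∏ i ∈ Finset.Icc (r+1) (r+k), (i:ℝ) = ((r+k).factorial : ℝ) := by
  intro k
  induction k with
  | zero => simp [Finset.Icc_eq_empty_of_lt (by omega : r + 0 < r + 1)]
  | succ k ih =>
      rw [show r+(k+1) = (r+k)+1 by ring, Finset.prod_Icc_succ_top (by omega : r+1 ≤ r+k+1),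
        Nat.factorial_succ]
      push_cast
      push_cast at ih
      nlinarith [ih]

include ht htr hrt hr2

-- (r+k)! ≤ (k+1)!^{1-s} k!^s (r+k)^t
lemma fact_le_interp (k : ℕ) :
    ((r+k).factorial : ℝ)
      ≤ (((k+1).factorial : ℝ)) ^ (1 - (t - r + 1)) * ((k.factorial : ℝ)) ^ (t - r + 1)
        * ((r:ℝ)+k) ^ t := by
  set s := t - r + 1 with hs
  have hs0 : 0 ≤ s := by simp only [hs]; linarith
  have hs1 : s ≤ 1 := by simp only [hs]; linarith
  have hy : (((r+k:ℕ)):ℝ) = (r:ℝ)+k := by push_cast; ring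
  have hx : (0:ℝ) < (((r+k:ℕ)):ℝ) := by
    rw [hy]
    have : (2:ℝ) ≤ (r:ℝ) := by exact_mod_cast hr2
    have : (0:ℝ) ≤ (k:ℝ) := by positivity
    linarith
  have h1n : (r+k).factorial ≤ (k+1).factorial * (r+k)^(r-1) := by
    have h := fact_le_pow_mul (k+1) (r-1)
    rwa [show (k+1)+(r-1) = r+k by omega] at h
  have h2n : (r+k).factorial ≤ k.factorial * (r+k)^r := by
    have h := fact_le_pow_mul k r
    rwa [show k+r = r+k by omega] at h
  have h1 : ((r+k).factorial : ℝ) ≤ ((k+1).factorial : ℝ) * (((r+k:ℕ)):ℝ)^(r-1:ℕ) := by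
    exact_mod_cast h1n
  have h2 : ((r+k).factorial : ℝ) ≤ ((k).factorial : ℝ) * (((r+k:ℕ)):ℝ)^(r:ℕ) := by
    exact_mod_cast h2n
  have key : ((r+k).factorial : ℝ)
      = (((r+k).factorial : ℝ)) ^ (1-s) * (((r+k).factorial : ℝ)) ^ s := by
    rw [← Real.rpow_add (by positivity), sub_add_cancel, Real.rpow_one]
  rw [key, ← hy]
  have hb1 : (((r+k).factorial : ℝ)) ^ (1-s)
      ≤ (((k+1).factorial : ℝ) * (((r+k:ℕ)):ℝ) ^ (r-1 : ℕ)) ^ (1-s) :=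
    Real.rpow_le_rpow (by positivity) h1 (by linarith)
  have hb2 : (((r+k).factorial : ℝ)) ^ s
      ≤ (((k).factorial : ℝ) * (((r+k:ℕ)):ℝ) ^ (r : ℕ)) ^ s :=
    Real.rpow_le_rpow (by positivity) h2 hs0
  calc (((r+k).factorial : ℝ)) ^ (1-s) * (((r+k).factorial : ℝ)) ^ s
      ≤ (((k+1).factorial : ℝ) * (((r+k:ℕ)):ℝ) ^ (r-1 : ℕ)) ^ (1-s)
        * (((k).factorial : ℝ) * (((r+k:ℕ)):ℝ) ^ (r : ℕ)) ^ s := by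
        apply mul_le_mul hb1 hb2 (by positivity) (by positivity)
    _ = ((k+1).factorial : ℝ) ^ (1-s) * ((k).factorial : ℝ) ^ s
        * ((((r+k:ℕ)):ℝ) ^ (((r-1:ℕ):ℝ) * (1-s)) * (((r+k:ℕ)):ℝ) ^ (((r:ℕ):ℝ) * s)) := by
        rw [Real.mul_rpow (by positivity) (by positivity),
          Real.mul_rpow (by positivity) (by positivity),
          ← Real.rpow_natCast ((((r+k:ℕ)):ℝ)) (r-1), ← Real.rpow_natCast ((((r+k:ℕ)):ℝ)) r,
          ← Real.rpow_mul (le_of_lt hx), ← Real.rpow_mul (le_of_lt hx)]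
        ring
    _ = ((k+1).factorial : ℝ) ^ (1-s) * ((k).factorial : ℝ) ^ s * ((((r+k:ℕ)):ℝ)) ^ t := by
        rw [← Real.rpow_add hx]
        congr 1
        have hc : ((r-1:ℕ):ℝ) = (r:ℝ) - 1 := by
          have h1r : 1 ≤ r := by omega
          push_cast [Nat.cast_sub h1r]
          ring
        rw [hc]
        simp only [hs]
        ring

lemma Kfun_lt {n : ℕ} (hn : 2 ≤ n) : Kfun t r n < 2 * (n:ℝ)^t := by
  have hnpos : (0:ℝ) < (n:ℝ) := by positivity
  have h2n : (2:ℝ) ≤ (n:ℝ) := by exact_mod_cast hn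
  have hnt_pos : (0:ℝ) < (n:ℝ)^t := Real.rpow_pos_of_pos hnpos t
  rcases le_or_gt n r with hnr | hrn
  · -- small case : empty product
    have hprod : Finset.Icc (r+1) n = ∅ := Finset.Icc_eq_empty_of_lt (by omega)
    have hK : Kfun t r n = (2:ℝ)^r - 2 := by
      rw [Kfun, hprod]; simp
    rw [hK]
    have e1 : (2:ℝ)^r = 2 * (2:ℝ)^(r-1 : ℕ) := by
      rw [← pow_succ']
      congr 1
      omega
    have e2 : (2:ℝ)^(r-1:ℕ) ≤ (2:ℝ)^t := by
      rw [← Real.rpow_natCast 2 (r-1)]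
      apply Real.rpow_le_rpow_of_exponent_le one_le_two
      have : ((r-1:ℕ):ℝ) = (r:ℝ) - 1 := by
        have h1r : 1 ≤ r := by omega
        push_cast [Nat.cast_sub h1r]; ring
      rw [this]; linarith
    have e3 : (2:ℝ)^t ≤ (n:ℝ)^t :=
      Real.rpow_le_rpow (by norm_num) h2n (by linarith)
    have : (0:ℝ) < (2:ℝ)^r := by positivity
    calc (2:ℝ)^r - 2 < (2:ℝ)^r := by linarith
      _ = 2 * (2:ℝ)^(r-1:ℕ) := e1
      _ ≤ 2 * (n:ℝ)^t := by nlinarith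
  · -- large case
    obtain ⟨k, rfl⟩ : ∃ k, n = r + k := ⟨n - r, by omega⟩
    set s := t - r + 1 with hs
    have hy : (((r+k:ℕ)):ℝ) = (r:ℝ)+k := by push_cast; ring
    have hprod_pos : (0:ℝ) < ∏ i ∈ Finset.Icc (r+1) (r+k), ((i:ℝ) - t) := by
      apply Finset.prod_pos
      intro i hi
      simp only [Finset.mem_Icc] at hi
      have : (r:ℝ) + 1 ≤ (i:ℝ) := by exact_mod_cast hi.1
      linarith
    have hB : (0:ℝ) < (((k+1).factorial : ℝ)) ^ (1 - s) * ((k.factorial : ℝ)) ^ s := by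
      positivity
    have hA := prod_sub_ge ht htr hrt hr2 k   -- B ≤ ∏ (i - t)
    have hC := fact_le_interp ht htr hrt hr2 k -- (r+k)! ≤ B * (r+k)^t
    have hfac_pos : (0:ℝ) < ((r+k).factorial : ℝ) := by positivity
    have hrfac_pos : (0:ℝ) < (r.factorial : ℝ) := by positivity
    -- ∏ i/(i-t) = ((r+k)!/r!) / ∏(i-t)
    have hsplit : (∏ i ∈ Finset.Icc (r+1) (r+k), ((i:ℝ)/((i:ℝ) - t)))
        = (((r+k).factorial : ℝ) / (r.factorial : ℝ))
          / (∏ i ∈ Finset.Icc (r+1) (r+k), ((i:ℝ) - t)) := by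
      rw [Finset.prod_div_distrib]
      have hp := prod_Icc_id r k
      have hnum : (∏ i ∈ Finset.Icc (r+1) (r+k), (i:ℝ))
          = ((r+k).factorial : ℝ) / (r.factorial : ℝ) := by
        field_simp
        linear_combination hp
      rw [hnum]
    -- ∏ i/(i-t) ≤ (r+k)^t / r!
    have hmain : (∏ i ∈ Finset.Icc (r+1) (r+k), ((i:ℝ)/((i:ℝ) - t)))
        ≤ ((r:ℝ)+k)^t / (r.factorial : ℝ) := by
      rw [hsplit]
      rw [div_le_div_iff₀ (by positivity) (by positivity)]
      -- (r+k)!/r! * r! ≤ (r+k)^t * ∏(i-t)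
      have step : ((r+k).factorial : ℝ) ≤ ((r:ℝ)+k)^t
          * (∏ i ∈ Finset.Icc (r+1) (r+k), ((i:ℝ) - t)) := by
        calc ((r+k).factorial : ℝ)
            ≤ (((k+1).factorial : ℝ)) ^ (1 - s) * ((k.factorial : ℝ)) ^ s * ((r:ℝ)+k)^t := hC
          _ ≤ (∏ i ∈ Finset.Icc (r+1) (r+k), ((i:ℝ) - t)) * ((r:ℝ)+k)^t := by
              apply mul_le_mul_of_nonneg_right hA
              have : (0:ℝ) < ((r:ℝ)+k)^t := by
                apply Real.rpow_pos_of_pos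
                rw [← hy]; positivity
              linarith
          _ = ((r:ℝ)+k)^t * (∏ i ∈ Finset.Icc (r+1) (r+k), ((i:ℝ) - t)) := by ring
      calc ((r+k).factorial : ℝ) / (r.factorial : ℝ) * (r.factorial : ℝ)
          = ((r+k).factorial : ℝ) := by field_simp
        _ ≤ ((r:ℝ)+k)^t * (∏ i ∈ Finset.Icc (r+1) (r+k), ((i:ℝ) - t)) := step
    -- constant : 2^r - 2 < 2 r!
    have hconst : (2:ℝ)^r - 2 < 2 * (r.factorial : ℝ) := by
      have h := two_pow_le_fact r (by omega)
      have h' : (2:ℝ)^(r-1:ℕ) ≤ (r.factorial : ℝ) := by exact_mod_cast h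
      have e1 : (2:ℝ)^r = 2 * (2:ℝ)^(r-1 : ℕ) := by
        rw [← pow_succ']; congr 1; omega
      nlinarith
    have hKpos : (0:ℝ) < (2:ℝ)^r - 2 := by
      have : (2:ℝ)^2 ≤ (2:ℝ)^r := pow_le_pow_right₀ one_le_two hr2
      nlinarith
    have hxt_pos : (0:ℝ) < ((r:ℝ)+k)^t := by
      apply Real.rpow_pos_of_pos; rw [← hy]; positivity
    rw [Kfun]
    calc ((2:ℝ)^r - 2) * (∏ i ∈ Finset.Icc (r+1) (r+k), ((i:ℝ)/((i:ℝ) - t)))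
        ≤ ((2:ℝ)^r - 2) * (((r:ℝ)+k)^t / (r.factorial : ℝ)) := by
          apply mul_le_mul_of_nonneg_left hmain (le_of_lt hKpos)
      _ < 2 * (r.factorial : ℝ) * (((r:ℝ)+k)^t / (r.factorial : ℝ)) := by
          apply mul_lt_mul_of_pos_right hconst (by positivity)
      _ = 2 * ((r:ℝ)+k)^t := by field_simp
      _ = 2 * ((r+k:ℕ):ℝ)^t := by rw [hy]

end Kb

lemma Kfun_nonneg {t : ℝ} {r : ℕ} (hr2 : 2 ≤ r) (htr : t ≤ r) (n : ℕ) :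
    0 ≤ Kfun t r n := by
  unfold Kfun
  apply mul_nonneg
  · have : (2:ℝ)^2 ≤ (2:ℝ)^r := pow_le_pow_right₀ one_le_two hr2
    nlinarith
  · apply Finset.prod_nonneg
    intro i hi
    simp only [Finset.mem_Icc] at hi
    have h1 : (r:ℝ) + 1 ≤ (i:ℝ) := by exact_mod_cast hi.1
    have h2 : t < (i:ℝ) := by linarith
    have h3 : (0:ℝ) ≤ (i:ℝ) := by positivity
    apply div_nonneg h3
    linarith

lemma Kfun_succ {t : ℝ} {r : ℕ} (k : ℕ) (hk : r + 1 ≤ k + 1) :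
    Kfun t r (k+1) = Kfun t r k * (((k+1:ℕ):ℝ) / (((k+1:ℕ):ℝ) - t)) := by
  unfold Kfun
  rw [Finset.prod_Icc_succ_top hk]
  ring

lemma key_count (t : ℝ) (ht : 2 ≤ t) (r : ℕ) (htr : t ≤ r) (hrt : (r:ℝ) < t + 1)
    (hr2 : 2 ≤ r) :
    ∀ (n : ℕ) (V E : Type) [Fintype V] [DecidableEq V] [Fintype E]
      (D : E → V × V), Fintype.card V = n →
    (∀ e, (D e).1 ≠ (D e).2) → 2 ≤ Fintype.card V →
    (∀ x : V, (Finset.univ.filter (fun e => (D e).1 = x)).card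
        = (Finset.univ.filter (fun e => (D e).2 = x)).card) →
    ∀ c : ℕ, 1 ≤ c →
    (∀ A : Finset V, A.Nonempty → Aᶜ.Nonempty → c ≤ dirCutValue D A) →
    ((Finset.univ.filter (fun A : Finset V =>
        A.Nonempty ∧ Aᶜ.Nonempty ∧ 2 * (dirCutValue D A : ℝ) ≤ t * c)).card : ℝ)
      ≤ Kfun t r n := by
  intro n
  induction n using Nat.strong_induction_on with
  | _ n IH =>
  intro V E _ _ _ D hcard hnd hn2 heul c hc hmin
  have hVne : Nonempty V := Fintype.card_pos_iff.1 (by omega)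
  set 𝒞 : Finset (Finset V) := Finset.univ.filter (fun A : Finset V =>
      A.Nonempty ∧ Aᶜ.Nonempty ∧ 2 * (dirCutValue D A : ℝ) ≤ t * c) with h𝒞
  rcases le_or_gt n r with hnr | hrn
  · -- base case : trivial bound by the number of proper nonempty subsets
    have hne : (∅ : Finset V) ≠ (Finset.univ : Finset V) := by
      intro h
      have := Finset.univ_nonempty (α := V)
      rw [← h] at this
      exact Finset.not_nonempty_empty this
    have hsub : 𝒞 ⊆ (Finset.univ : Finset (Finset V)) \ {∅, Finset.univ} := by
      intro A hA
      simp only [h𝒞, Finset.mem_filter, Finset.mem_univ, true_and] at hA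
      obtain ⟨h1, h2, _⟩ := hA
      simp only [Finset.mem_sdiff, Finset.mem_univ, true_and, Finset.mem_insert,
        Finset.mem_singleton]
      push_neg
      constructor
      · exact h1
      · intro h
        rw [h] at h2
        simp at h2
    have hcard2 : ((Finset.univ : Finset (Finset V)) \ {∅, Finset.univ}).card
        = 2^n - 2 := by
      rw [Finset.card_sdiff_of_subset (Finset.subset_univ _), Finset.card_univ, Fintype.card_finset,
        hcard]
      congr 1
      rw [Finset.card_insert_of_notMem (by simp [hne]), Finset.card_singleton]
    have hN : 𝒞.card ≤ 2^n - 2 := by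
      rw [← hcard2]; exact Finset.card_le_card hsub
    have h2n : 2 ≤ 2^n := by
      calc (2:ℕ) = 2^1 := by norm_num
        _ ≤ 2^n := Nat.pow_le_pow_right (by norm_num) (by omega)
    have hcastN : ((2^n - 2 : ℕ) : ℝ) = (2:ℝ)^n - 2 := by
      push_cast [Nat.cast_sub h2n]
      norm_num
    have hK : Kfun t r n = (2:ℝ)^r - 2 := by
      unfold Kfun
      rw [Finset.Icc_eq_empty_of_lt (by omega : n < r + 1)]
      simp
    rw [hK]
    calc (𝒞.card : ℝ) ≤ ((2^n - 2 : ℕ) : ℝ) := by exact_mod_cast hN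
      _ = (2:ℝ)^n - 2 := hcastN
      _ ≤ (2:ℝ)^r - 2 := by
          have : (2:ℝ)^n ≤ (2:ℝ)^r := pow_le_pow_right₀ one_le_two hnr
          linarith
  · -- inductive step : contract each edge
    obtain ⟨k, rfl⟩ : ∃ k, n = k + 1 := ⟨n - 1, by omega⟩
    set m := Fintype.card E with hm
    -- every out-degree is at least c, hence m ≥ n * c
    have houtdeg : ∀ x : V, c ≤ (univ.filter (fun e => (D e).1 = x)).card := by
      intro x
      have hcompl : ({x} : Finset V)ᶜ.Nonempty := by
        rw [← Finset.card_pos, Finset.card_compl, Finset.card_singleton]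
        omega
      have h1 := hmin {x} (Finset.singleton_nonempty x) hcompl
      refine le_trans h1 ?_
      unfold dirCutValue
      apply Finset.card_le_card
      intro e he
      simp only [Finset.mem_filter, Finset.mem_univ, true_and, Finset.mem_singleton] at he ⊢
      exact he.1
    have hmnc : Fintype.card V * c ≤ m := by
      have h1 := card_filter_mem_eq_sum (fun e => (D e).1) (univ : Finset V)
      have h2 : (univ.filter (fun e : E => (D e).1 ∈ (univ : Finset V))).card = m := by
        simp [hm]
      rw [h2] at h1
      calc Fintype.card V * c = ∑ _x ∈ (univ : Finset V), c := by
            rw [Finset.sum_const, smul_eq_mul, Finset.card_univ]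
        _ ≤ ∑ x ∈ (univ : Finset V), (univ.filter (fun e : E => (D e).1 = x)).card :=
            Finset.sum_le_sum (fun x _ => houtdeg x)
        _ = m := h1.symm
    -- basic real inequalities
    have hntR : t < ((k+1:ℕ):ℝ) := by
      have : (r:ℝ) + 1 ≤ ((k+1:ℕ):ℝ) := by exact_mod_cast hrn
      linarith
    have hcR : (1:ℝ) ≤ (c:ℝ) := by exact_mod_cast hc
    have hmR : ((k+1:ℕ):ℝ) * (c:ℝ) ≤ (m:ℝ) := by
      rw [← hcard]
      exact_mod_cast hmnc
    have hmtc : 0 < (m:ℝ) - t * c := by nlinarith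
    -- each A in 𝒞 is not separated by many edges
    have hsame : ∀ A ∈ 𝒞, (m:ℝ) - t * c
        ≤ ((univ.filter (fun e => ((D e).1 ∈ A ↔ (D e).2 ∈ A))).card : ℝ) := by
      intro A hA
      simp only [h𝒞, Finset.mem_filter, Finset.mem_univ, true_and] at hA
      obtain ⟨-, -, h3⟩ := hA
      have h4 := card_sameside D A
      have h5 := dirCut_compl D heul A
      rw [← h5] at h4
      have h6 : ((univ.filter (fun e => ((D e).1 ∈ A ↔ (D e).2 ∈ A))).card : ℝ)
          + 2 * (dirCutValue D A : ℝ) = (m:ℝ) := by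
        exact_mod_cast congrArg (Nat.cast (R := ℝ)) (by omega : (univ.filter (fun e => ((D e).1 ∈ A ↔ (D e).2 ∈ A))).card + 2 * dirCutValue D A = m)
      linarith
    -- double counting
    have hswap : ∑ A ∈ 𝒞, (univ.filter (fun e => ((D e).1 ∈ A ↔ (D e).2 ∈ A))).card
        = ∑ e : E, (𝒞.filter (fun A => ((D e).1 ∈ A ↔ (D e).2 ∈ A))).card := by
      simp only [Finset.card_filter]
      exact Finset.sum_comm
    -- per-edge bound via contraction and the inductive hypothesis
    have hedge : ∀ e : E,
        ((𝒞.filter (fun A => ((D e).1 ∈ A ↔ (D e).2 ∈ A))).card : ℝ) ≤ Kfun t r k := by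
      intro e
      have huv : (D e).1 ≠ (D e).2 := hnd e
      set v := (D e).2 with hv
      -- the contracted graph
      have hcard' : Fintype.card {y : V // y ≠ v} = k := by
        rw [cD_card, hcard]
        omega
      have hn2' : 2 ≤ Fintype.card {y : V // y ≠ v} := by
        rw [hcard']
        omega
      have hmin' : ∀ A' : Finset {y : V // y ≠ v}, A'.Nonempty → A'ᶜ.Nonempty →
          c ≤ dirCutValue (cD D huv) A' := by
        intro A' h1 h2
        rw [cD_cut]
        apply hmin _ (pb_nonempty huv h1)
        rw [pb_compl]
        exact pb_nonempty huv h2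
      have hIH := IH k (by omega) {y : V // y ≠ v} {f : E // cq huv (D f).1 ≠ cq huv (D f).2}
        (cD D huv) hcard' (cD_nd D huv) hn2' (cD_eul D huv heul) c hc hmin'
      -- the injection
      have hinj : (𝒞.filter (fun A => ((D e).1 ∈ A ↔ (D e).2 ∈ A))).card
          ≤ (Finset.univ.filter (fun A' : Finset {y : V // y ≠ v} =>
              A'.Nonempty ∧ A'ᶜ.Nonempty ∧ 2 * (dirCutValue (cD D huv) A' : ℝ) ≤ t * c)).card := by
        apply Finset.card_le_card_of_injOn (phi v)
        · intro A hA
          simp only [Finset.mem_coe, h𝒞, Finset.mem_filter, Finset.mem_univ, true_and] at hA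
          obtain ⟨⟨h1, h2, h3⟩, h4⟩ := hA
          simp only [Finset.mem_coe, Finset.mem_filter, Finset.mem_univ, true_and]
          refine ⟨phi_nonempty huv A h1 h4, phi_compl_nonempty huv A h2 h4, ?_⟩
          rw [cD_cut, pb_phi huv A h4]
          exact h3
        · intro A1 hA1 A2 hA2 heq
          simp only [Finset.coe_filter, Set.mem_setOf_eq, h𝒞, Finset.mem_filter,
            Finset.mem_univ, true_and] at hA1 hA2
          rw [← pb_phi huv A1 hA1.2, ← pb_phi huv A2 hA2.2, heq]
      calc ((𝒞.filter (fun A => ((D e).1 ∈ A ↔ (D e).2 ∈ A))).card : ℝ)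
          ≤ ((Finset.univ.filter (fun A' : Finset {y : V // y ≠ v} =>
              A'.Nonempty ∧ A'ᶜ.Nonempty ∧ 2 * (dirCutValue (cD D huv) A' : ℝ) ≤ t * c)).card : ℝ) := by
            exact_mod_cast hinj
        _ ≤ Kfun t r k := hIH
    -- combine everything
    have hKk := Kfun_nonneg hr2 htr k
    have hsum1 : (𝒞.card : ℝ) * ((m:ℝ) - t * c)
        ≤ ∑ A ∈ 𝒞, ((univ.filter (fun e => ((D e).1 ∈ A ↔ (D e).2 ∈ A))).card : ℝ) := by
      calc (𝒞.card : ℝ) * ((m:ℝ) - t * c) = ∑ _A ∈ 𝒞, ((m:ℝ) - t * c) := by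
            rw [Finset.sum_const, nsmul_eq_mul]
        _ ≤ _ := Finset.sum_le_sum hsame
    have hsum2 : (∑ A ∈ 𝒞, ((univ.filter (fun e => ((D e).1 ∈ A ↔ (D e).2 ∈ A))).card : ℝ))
        = ∑ e : E, ((𝒞.filter (fun A => ((D e).1 ∈ A ↔ (D e).2 ∈ A))).card : ℝ) := by
      exact_mod_cast congrArg (Nat.cast (R := ℝ)) hswap
    have hsum3 : (∑ e : E, ((𝒞.filter (fun A => ((D e).1 ∈ A ↔ (D e).2 ∈ A))).card : ℝ))
        ≤ (m:ℝ) * Kfun t r k := by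
      calc _ ≤ ∑ _e : E, Kfun t r k := Finset.sum_le_sum (fun e _ => hedge e)
        _ = (m:ℝ) * Kfun t r k := by
            rw [Finset.sum_const, nsmul_eq_mul, Finset.card_univ]
    have hmain : (𝒞.card : ℝ) * ((m:ℝ) - t * c) ≤ (m:ℝ) * Kfun t r k := by
      calc (𝒞.card : ℝ) * ((m:ℝ) - t * c) ≤ _ := hsum1
        _ = _ := hsum2
        _ ≤ _ := hsum3
    -- divide out
    rw [Kfun_succ k (by omega)]
    have hnt0 : (0:ℝ) < ((k+1:ℕ):ℝ) - t := by linarith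
    rw [← mul_div_assoc, le_div_iff₀ hnt0]
    -- goal : N * ((k+1) - t) ≤ K * (k+1)
    have h3 : (𝒞.card : ℝ) * ((m:ℝ) - t * c) * (((k+1:ℕ):ℝ) - t)
        ≤ (m:ℝ) * Kfun t r k * (((k+1:ℕ):ℝ) - t) :=
      mul_le_mul_of_nonneg_right hmain (le_of_lt hnt0)
    have h4 : (m:ℝ) * Kfun t r k * (((k+1:ℕ):ℝ) - t)
        ≤ ((k+1:ℕ):ℝ) * Kfun t r k * ((m:ℝ) - t * c) := by
      have haux : 0 ≤ Kfun t r k * t * ((m:ℝ) - ((k+1:ℕ):ℝ) * c) := by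
        apply mul_nonneg (mul_nonneg hKk (by linarith))
        linarith
      nlinarith [haux]
    have h5 : (𝒞.card : ℝ) * (((k+1:ℕ):ℝ) - t) * ((m:ℝ) - t * c)
        ≤ Kfun t r k * ((k+1:ℕ):ℝ) * ((m:ℝ) - t * c) := by nlinarith [h3, h4]
    have h6 : (𝒞.card : ℝ) * (((k+1:ℕ):ℝ) - t) ≤ Kfun t r k * ((k+1:ℕ):ℝ) :=
      le_of_mul_le_mul_right (by linarith [h5]) hmtc
    linarith [h6]

/-- Let `D` be an Eulerian directed multigraph on `n ≥ 2` vertices (every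
vertex has in-degree equal to out-degree) whose minimum directed cut value `c` is at least `1`,
and let `α ≥ 1` be real.  Then the number of nonempty proper vertex subsets `A` whose directed
cut has value at most `α * c` is less than `2 n ^ (2α)`. -/
theorem stmt18 {V E : Type} [Fintype V] [DecidableEq V] [Fintype E]
    (D : E → V × V) (hnd : ∀ e, (D e).1 ≠ (D e).2)
    (hn : 2 ≤ Fintype.card V)
    (heul : ∀ x : V, (Finset.univ.filter (fun e => (D e).1 = x)).card
        = (Finset.univ.filter (fun e => (D e).2 = x)).card)
    (c : ℕ) (hc : 1 ≤ c)
    (hmin : ∀ A : Finset V, A.Nonempty → Aᶜ.Nonempty → c ≤ dirCutValue D A)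
    (hex : ∃ A : Finset V, A.Nonempty ∧ Aᶜ.Nonempty ∧ dirCutValue D A = c)
    (α : ℝ) (hα : 1 ≤ α) :
    ((Finset.univ.filter (fun A : Finset V =>
        A.Nonempty ∧ Aᶜ.Nonempty ∧ (dirCutValue D A : ℝ) ≤ α * c)).card : ℝ)
      < 2 * (Fintype.card V : ℝ) ^ (2 * α) := by
  set t : ℝ := 2 * α with htdef
  have ht : 2 ≤ t := by simp only [htdef]; linarith
  set r : ℕ := ⌈t⌉₊ with hrdef
  have htr : t ≤ (r : ℝ) := Nat.le_ceil t
  have hrt : (r : ℝ) < t + 1 := Nat.ceil_lt_add_one (by linarith)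
  have hr2 : 2 ≤ r := by
    have : 1 < r := Nat.lt_ceil.2 (by push_cast; linarith)
    omega
  have hfilter : (Finset.univ.filter (fun A : Finset V =>
        A.Nonempty ∧ Aᶜ.Nonempty ∧ (dirCutValue D A : ℝ) ≤ α * c))
      = (Finset.univ.filter (fun A : Finset V =>
        A.Nonempty ∧ Aᶜ.Nonempty ∧ 2 * (dirCutValue D A : ℝ) ≤ t * c)) := by
    apply Finset.filter_congr
    intro A _
    constructor
    · rintro ⟨h1, h2, h3⟩
      exact ⟨h1, h2, by simp only [htdef]; linarith⟩
    · rintro ⟨h1, h2, h3⟩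
      refine ⟨h1, h2, ?_⟩
      simp only [htdef] at h3
      linarith
  rw [hfilter]
  calc ((Finset.univ.filter (fun A : Finset V =>
        A.Nonempty ∧ Aᶜ.Nonempty ∧ 2 * (dirCutValue D A : ℝ) ≤ t * c)).card : ℝ)
      ≤ Kfun t r (Fintype.card V) :=
        key_count t ht r htr hrt hr2 (Fintype.card V) V E D rfl hnd hn heul c hc hmin
    _ < 2 * (Fintype.card V : ℝ) ^ t := Kfun_lt ht htr hrt hr2 hn
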